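/- Let m ≥ 1 and k ≥ 0 with k+1 ≤ m, let O ⊆ [m] with 1 ∈ O and #O = k+1, and let i ∈ [k]. Then for every real q > 0: q^{i} · Σ_{π∈P(m,k+1;O)} q^{−rinv(F(π),π)} = Σ_{π∈P(m,k+1;O)} q^{stat_{i+1}(π)}, where the exponents are integers. -/

import Mathlib

open Finset Polynomial

/-- A partition of `[n] = {1,…,n}` into `k` nonempty blocks `B₁-⋯-B_k`, indexed so that
`min B₁ < ⋯ < min B_k`, encoded by its restricted-growth word `w : Fin n → Fin k`
(the element `i+1` of `[n]` lies in the block `B_{w i + 1}`). -/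
structure SetPartition (n k : ℕ) where
  w : Fin n → Fin k
  surj : Function.Surjective w
  rgf : ∀ i : Fin n, ∀ c : Fin k, c < w i → ∃ j : Fin n, j < i ∧ w j = c

namespace SetPartition

variable {n k : ℕ}

instance : DecidableEq (SetPartition n k) := fun a b =>
  decidable_of_iff (a.w = b.w) (by cases a; cases b; simp)

noncomputable instance : Fintype (SetPartition n k) :=
  Fintype.ofInjective (fun π => π.w) (fun a b h => by cases a; cases b; simp_all)

/-- The set of openers (smallest elements of their blocks). -/
def openers (π : SetPartition n k) : Finset (Fin n) :=
  univ.filter fun i => ∀ j, j < i → π.w j ≠ π.w i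

/-- The set of closers (largest elements of their blocks). -/
def closers (π : SetPartition n k) : Finset (Fin n) :=
  univ.filter fun i => ∀ j, i < j → π.w j ≠ π.w i

/-- Closers that are not openers (`F_s`). -/
def closersOnly (π : SetPartition n k) : Finset (Fin n) := π.closers \ π.openers

/-- Openers that are not closers (`O_s`). -/
def openersOnly (π : SetPartition n k) : Finset (Fin n) := π.openers \ π.closers

/-- Elements that are neither openers nor closers (`P`, the transients). -/
def transients (π : SetPartition n k) : Finset (Fin n) :=
  univ \ (π.openers ∪ π.closers)

def ros (π : SetPartition n k) : ℕ :=
  ∑ i, (π.openers.filter fun j => j < i ∧ π.w i < π.w j).card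
def rob (π : SetPartition n k) : ℕ :=
  ∑ i, (π.openers.filter fun j => i < j ∧ π.w i < π.w j).card
def rcs (π : SetPartition n k) : ℕ :=
  ∑ i, (π.closers.filter fun j => j < i ∧ π.w i < π.w j).card
def rcb (π : SetPartition n k) : ℕ :=
  ∑ i, (π.closers.filter fun j => i < j ∧ π.w i < π.w j).card
def los (π : SetPartition n k) : ℕ :=
  ∑ i, (π.openers.filter fun j => j < i ∧ π.w j < π.w i).card
def lob (π : SetPartition n k) : ℕ :=
  ∑ i, (π.openers.filter fun j => i < j ∧ π.w j < π.w i).card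
def lcs (π : SetPartition n k) : ℕ :=
  ∑ i, (π.closers.filter fun j => j < i ∧ π.w j < π.w i).card
def lcb (π : SetPartition n k) : ℕ :=
  ∑ i, (π.closers.filter fun j => i < j ∧ π.w j < π.w i).card

def mak (π : SetPartition n k) : ℕ := π.ros + π.lcs
def mak' (π : SetPartition n k) : ℕ := π.lob + π.rcb
def lmak (π : SetPartition n k) : ℤ :=
  (n : ℤ) * ((k : ℤ) - 1) - ((π.los : ℤ) + (π.rcs : ℤ))
def lmak' (π : SetPartition n k) : ℤ :=
  (n : ℤ) * ((k : ℤ) - 1) - ((π.lcb : ℤ) + (π.rob : ℤ))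

/-- `rinv(b,π) = #{a : a < b, w_a > w_b}`. -/
def rinv (π : SetPartition n k) (b : Fin n) : ℕ :=
  (univ.filter fun a => a < b ∧ π.w b < π.w a).card

/-- `nrinv(b,π) = #{a : a > b, w_a > w_b}`. -/
def nrinv (π : SetPartition n k) (b : Fin n) : ℕ :=
  (univ.filter fun a => b < a ∧ π.w b < π.w a).card

/-- `linv(b,π) = #{a : a > b, w_a < w_b}`. -/
def linv (π : SetPartition n k) (b : Fin n) : ℕ :=
  (univ.filter fun a => b < a ∧ π.w a < π.w b).card

/-- `rinv(X,π) = Σ_{b ∈ X} rinv(b,π)`. -/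
def rinvSet (π : SetPartition n k) (X : Finset (Fin n)) : ℕ := ∑ b ∈ X, π.rinv b

/-- `linv(X,π) = Σ_{b ∈ X} linv(b,π)`. -/
def linvSet (π : SetPartition n k) (X : Finset (Fin n)) : ℕ := ∑ b ∈ X, π.linv b

/-- `g(B_c)`: the largest element of the block with index `c`. -/
def blockMax (π : SetPartition n k) (c : Fin k) : Fin n :=
  (univ.filter fun i => π.w i = c).max' (by
    obtain ⟨i, hi⟩ := π.surj c
    exact ⟨i, mem_filter.2 ⟨mem_univ i, hi⟩⟩)

/-- The block with index `c` is incomplete at stage `m`, i.e. it meets the first `m`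
elements of `[n]` but is not contained in them. -/
def IncompleteAt (π : SetPartition n k) (m : ℕ) (c : Fin k) : Prop :=
  (∃ j : Fin n, (j : ℕ) < m ∧ π.w j = c) ∧ ∃ j : Fin n, m ≤ (j : ℕ) ∧ π.w j = c

instance (π : SetPartition n k) (m : ℕ) : DecidablePred (π.IncompleteAt m) := fun c =>
  inferInstanceAs (Decidable
    ((∃ j : Fin n, (j : ℕ) < m ∧ π.w j = c) ∧ ∃ j : Fin n, m ≤ (j : ℕ) ∧ π.w j = c))

/-- `l_i(π)`: the number of blocks incomplete at stage `i-1`; here the element `i` of `[n]`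
is represented by the index `i - 1 : Fin n`, so the first `i - 1` elements are those with
index `< i`. -/
def lTrace (π : SetPartition n k) (i : Fin n) : ℕ :=
  (univ.filter fun c => π.IncompleteAt (i : ℕ) c).card

/-- `γ_i(π)`: one plus the number of blocks incomplete at stage `i` lying to the left of the
block containing `i`. -/
def gammaTrace (π : SetPartition n k) (i : Fin n) : ℕ :=
  1 + (univ.filter fun c => π.IncompleteAt ((i : ℕ) + 1) c ∧ c < π.w i).card

end SetPartition

/-- The `q`-Stirling numbers of the second kind `S_q(n,k) ∈ ℤ[q]`, with
`S_q(n,k) = q^{k-1} S_q(n-1,k-1) + [k]_q S_q(n-1,k)`, `S_q(0,0) = 1`, and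
`S_q(n,k) = 0` when exactly one of `n,k` is zero (whence also for `k > n`). -/
noncomputable def qStirling : ℕ → ℕ → Polynomial ℤ
  | 0, 0 => 1
  | 0, _ + 1 => 0
  | _ + 1, 0 => 0
  | n + 1, k + 1 =>
      X ^ k * qStirling n k + (∑ i ∈ Finset.range (k + 1), X ^ i) * qStirling n (k + 1)

namespace SetPartition

variable {n K : ℕ}

theorem ext' {π ρ : SetPartition n K} (h : π.w = ρ.w) : π = ρ := by
  cases π; cases ρ; simpa using h

/-- The smallest element of the block with index `c`. -/
noncomputable def blockMin (π : SetPartition n K) (c : Fin K) : Fin n :=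
  (univ.filter fun i => π.w i = c).min' (by
    obtain ⟨i, hi⟩ := π.surj c
    exact ⟨i, mem_filter.2 ⟨mem_univ i, hi⟩⟩)

theorem w_blockMin (π : SetPartition n K) (c : Fin K) : π.w (π.blockMin c) = c := by
  have := Finset.min'_mem (univ.filter fun i => π.w i = c) (by
    obtain ⟨i, hi⟩ := π.surj c
    exact ⟨i, mem_filter.2 ⟨mem_univ i, hi⟩⟩)
  exact (mem_filter.1 this).2

theorem blockMin_le (π : SetPartition n K) {c : Fin K} {i : Fin n} (h : π.w i = c) :
    π.blockMin c ≤ i :=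
  Finset.min'_le _ _ (mem_filter.2 ⟨mem_univ i, h⟩)

theorem w_blockMax (π : SetPartition n K) (c : Fin K) : π.w (π.blockMax c) = c := by
  have := Finset.max'_mem (univ.filter fun i => π.w i = c) (by
    obtain ⟨i, hi⟩ := π.surj c
    exact ⟨i, mem_filter.2 ⟨mem_univ i, hi⟩⟩)
  exact (mem_filter.1 this).2

theorem le_blockMax (π : SetPartition n K) {c : Fin K} {i : Fin n} (h : π.w i = c) :
    i ≤ π.blockMax c :=
  Finset.le_max' _ _ (mem_filter.2 ⟨mem_univ i, h⟩)

theorem blockMax_eq_of (π : SetPartition n K) {c : Fin K} {b : Fin n} (hb : π.w b = c)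
    (hmax : ∀ i, π.w i = c → i ≤ b) : π.blockMax c = b := by
  refine le_antisymm ?_ (π.le_blockMax hb)
  exact hmax _ (π.w_blockMax c)

theorem blockMin_lt_blockMin (π : SetPartition n K) {c d : Fin K} (h : c < d) :
    π.blockMin c < π.blockMin d := by
  obtain ⟨j, hj, hjw⟩ := π.rgf (π.blockMin d) c (by rw [π.w_blockMin d]; exact h)
  exact lt_of_le_of_lt (π.blockMin_le hjw) hj

theorem blockMin_le_of_le (π : SetPartition n K) {d : Fin K} {i : Fin n} (h : d ≤ π.w i) :
    π.blockMin d ≤ i := by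
  rcases eq_or_lt_of_le h with h | h
  · exact π.blockMin_le h.symm
  · exact le_of_lt (lt_of_lt_of_le (π.blockMin_lt_blockMin h) (π.blockMin_le rfl))

theorem blockMin_le_blockMax (π : SetPartition n K) (c : Fin K) :
    π.blockMin c ≤ π.blockMax c :=
  π.blockMin_le (π.w_blockMax c)

theorem mem_openers_iff (π : SetPartition n K) {i : Fin n} :
    i ∈ π.openers ↔ π.blockMin (π.w i) = i := by
  unfold openers
  rw [mem_filter]
  constructor
  · rintro ⟨-, h⟩
    refine le_antisymm (π.blockMin_le rfl) ?_
    by_contra hlt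
    push_neg at hlt
    exact h _ hlt (π.w_blockMin (π.w i))
  · intro h
    refine ⟨mem_univ i, fun j hj hw => ?_⟩
    have := π.blockMin_le (c := π.w i) hw
    rw [h] at this
    exact absurd hj (not_lt.2 this)

theorem mem_closers_iff (π : SetPartition n K) {i : Fin n} :
    i ∈ π.closers ↔ π.blockMax (π.w i) = i := by
  unfold closers
  rw [mem_filter]
  constructor
  · rintro ⟨-, h⟩
    refine le_antisymm ?_ (π.le_blockMax rfl)
    by_contra hlt
    push_neg at hlt
    exact h _ hlt (π.w_blockMax (π.w i))
  · intro h
    refine ⟨mem_univ i, fun j hj hw => ?_⟩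
    have := π.le_blockMax (c := π.w i) hw
    rw [h] at this
    exact absurd hj (not_lt.2 this)

/-- `rinv(b) + nrinv(b)` counts all positions whose letter exceeds that of `b`. -/
theorem rinv_add_nrinv (π : SetPartition n K) (b : Fin n) :
    π.rinv b + π.nrinv b = (univ.filter fun a => π.w b < π.w a).card := by
  unfold rinv nrinv
  rw [← Finset.card_union_of_disjoint]
  · congr 1
    ext a
    simp only [mem_union, mem_filter, mem_univ, true_and]
    constructor
    · rintro (⟨h1, h2⟩ | ⟨h1, h2⟩) <;> exact h2
    · intro h
      have : a ≠ b := by rintro rfl; exact lt_irrefl _ h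
      rcases this.lt_or_gt with h' | h'
      · exact Or.inl ⟨h', h⟩
      · exact Or.inr ⟨h', h⟩
  · rw [Finset.disjoint_left]
    rintro a ha hb
    simp only [mem_filter] at ha hb
    exact absurd (lt_trans ha.2.1 hb.2.1) (lt_irrefl a)

theorem rinvSet_closers (π : SetPartition n K) :
    π.rinvSet π.closers = ∑ e : Fin K, π.rinv (π.blockMax e) := by
  unfold rinvSet
  refine Finset.sum_nbij' (fun b => π.w b) (fun e => π.blockMax e) ?_ ?_ ?_ ?_ ?_
  · intro b _; exact mem_univ _
  · intro e _
    rw [π.mem_closers_iff, π.w_blockMax]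
  · intro b hb
    exact π.mem_closers_iff.1 hb
  · intro e _
    exact π.w_blockMax e
  · intro b hb
    rw [π.mem_closers_iff.1 hb]

end SetPartition
namespace SetPartition

variable {n K : ℕ}

section Relabel

variable (π : SetPartition n K) (c d : Fin K) (v : Fin n → Fin K)

/-- The hypothesis under which a modified word still yields a set partition with the
same openers: letters may only be changed between `c` and `d`, strictly after the
opener of block `d`. -/
def RelabelHyp : Prop :=
  ∀ a, v a = π.w a ∨
    (π.blockMin d < a ∧ (π.w a = c ∨ π.w a = d) ∧ (v a = c ∨ v a = d))

variable {π c d v}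
variable (hcd : c < d) (hadj : ∀ e, c < e → d ≤ e) (hv : RelabelHyp π c d v)

include hv

theorem RelabelHyp.low {a : Fin n} (ha : a ≤ π.blockMin d) : v a = π.w a := by
  rcases hv a with h | ⟨h1, -⟩
  · exact h
  · exact absurd ha (not_le.2 h1)

theorem RelabelHyp.eq_iff {a : Fin n} {e : Fin K} (he1 : e ≠ c) (he2 : e ≠ d) :
    v a = e ↔ π.w a = e := by
  rcases hv a with h | ⟨-, h2, h3⟩
  · rw [h]
  · constructor
    · rintro rfl; rcases h3 with h | h <;> simp_all
    · rintro rfl; rcases h2 with h | h <;> simp_all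

include hcd hadj

theorem RelabelHyp.lt_iff {a : Fin n} {e : Fin K} (he1 : e ≠ c) (he2 : e ≠ d) :
    e < v a ↔ e < π.w a := by
  rcases hv a with h | ⟨-, h2, h3⟩
  · rw [h]
  · rcases lt_or_ge e c with h | h
    · constructor <;> intro
      · rcases h2 with h' | h' <;> rw [h'] <;> [exact h; exact lt_trans h hcd]
      · rcases h3 with h' | h' <;> rw [h'] <;> [exact h; exact lt_trans h hcd]
    · have hec : c < e := lt_of_le_of_ne h (fun h' => he1 h'.symm)
      have hde : d < e := lt_of_le_of_ne (hadj e hec) (fun h' => he2 h'.symm)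
      constructor <;> intro hlt
      · rcases h3 with h' | h' <;> rw [h'] at hlt <;>
          [exact absurd (lt_trans hec hlt) (lt_irrefl _); exact absurd (lt_trans hde hlt) (lt_irrefl _)]
      · rcases h2 with h' | h' <;> rw [h'] at hlt <;>
          [exact absurd (lt_trans hec hlt) (lt_irrefl _); exact absurd (lt_trans hde hlt) (lt_irrefl _)]

omit hadj

theorem RelabelHyp.d_lt_iff {a : Fin n} : d < v a ↔ d < π.w a := by
  rcases hv a with h | ⟨-, h2, h3⟩
  · rw [h]
  · constructor <;> intro hlt
    · rcases h3 with h' | h' <;> rw [h'] at hlt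
      · exact absurd (lt_trans hcd hlt) (lt_irrefl _)
      · exact absurd hlt (lt_irrefl _)
    · rcases h2 with h' | h' <;> rw [h'] at hlt
      · exact absurd (lt_trans hcd hlt) (lt_irrefl _)
      · exact absurd hlt (lt_irrefl _)

include hadj

/-- The modified word as a set partition. -/
noncomputable def relabel : SetPartition n K where
  w := v
  surj := by
    intro e
    by_cases he2 : e = d
    · exact ⟨π.blockMin d, by rw [hv.low le_rfl, π.w_blockMin, he2]⟩
    by_cases he1 : e = c
    · refine ⟨π.blockMin c, ?_⟩
      rw [hv.low (le_of_lt (π.blockMin_lt_blockMin hcd)), π.w_blockMin, he1]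
    · exact ⟨π.blockMin e, (hv.eq_iff he1 he2).2 (π.w_blockMin e)⟩
  rgf := by
    intro i e he
    by_cases he2 : e = d
    · rw [he2] at he ⊢
      have hdw : d < π.w i := (hv.d_lt_iff hcd).1 he
      refine ⟨π.blockMin d, ?_, by rw [hv.low le_rfl, π.w_blockMin]⟩
      exact lt_of_lt_of_le (π.blockMin_lt_blockMin hdw) (π.blockMin_le rfl)
    by_cases he1 : e = c
    · rw [he1] at he ⊢
      refine ⟨π.blockMin c, ?_, by rw [hv.low (le_of_lt (π.blockMin_lt_blockMin hcd)), π.w_blockMin]⟩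
      -- need blockMin c < i, via blockMin d ≤ i
      have hdi : π.blockMin d ≤ i := by
        rcases hv i with h | ⟨h1, -⟩
        · rw [h] at he
          exact π.blockMin_le_of_le (hadj _ he)
        · exact le_of_lt h1
      exact lt_of_lt_of_le (π.blockMin_lt_blockMin hcd) hdi
    · -- e ∉ {c, d}
      rcases hv i with h | ⟨h1, -, h3⟩
      · rw [h] at he
        obtain ⟨j, hj, hjw⟩ := π.rgf i e he
        exact ⟨j, hj, (hv.eq_iff he1 he2).2 hjw⟩
      · -- v i ∈ {c, d}, so e < d, e ≠ d, and e ≠ c, hence e < c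
        have hed : e < d := by
          rcases h3 with h' | h' <;> rw [h'] at he
          · exact lt_trans he hcd
          · exact he
        have hec : e < c := by
          rcases lt_or_ge e c with h' | h'
          · exact h'
          · exact absurd (hadj e (lt_of_le_of_ne h' (fun h'' => he1 h''.symm)))
              (not_le.2 hed)
        obtain ⟨j, hj, hjw⟩ := π.rgf (π.blockMin d) e (by rw [π.w_blockMin]; exact hed)
        exact ⟨j, lt_trans (lt_of_lt_of_le hj le_rfl) h1,
          by rw [hv.low (le_of_lt hj)]; exact hjw⟩

theorem relabel_w : (relabel hcd hadj hv).w = v := rfl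

theorem relabel_blockMin (e : Fin K) :
    (relabel hcd hadj hv).blockMin e = π.blockMin e := by
  have hmem : v (π.blockMin e) = e := by
    by_cases he2 : e = d
    · rw [he2, hv.low le_rfl, π.w_blockMin]
    by_cases he1 : e = c
    · rw [he1, hv.low (le_of_lt (π.blockMin_lt_blockMin hcd)), π.w_blockMin]
    · exact (hv.eq_iff he1 he2).2 (π.w_blockMin e)
  have hmin : ∀ i, v i = e → π.blockMin e ≤ i := by
    intro i hi
    by_cases he2 : e = d
    · rw [he2] at hi ⊢
      rcases hv i with h | ⟨h1, -⟩
      · exact π.blockMin_le (h ▸ hi)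
      · exact le_of_lt h1
    by_cases he1 : e = c
    · rw [he1] at hi ⊢
      rcases hv i with h | ⟨h1, -⟩
      · exact π.blockMin_le (h ▸ hi)
      · exact le_of_lt (lt_trans (π.blockMin_lt_blockMin hcd) h1)
    · exact π.blockMin_le ((hv.eq_iff he1 he2).1 hi)
  exact le_antisymm ((relabel hcd hadj hv).blockMin_le hmem)
    (hmin _ ((relabel hcd hadj hv).w_blockMin e))

theorem relabel_openers : (relabel hcd hadj hv).openers = π.openers := by
  ext i
  rw [mem_openers_iff, mem_openers_iff, relabel_blockMin]
  show π.blockMin (v i) = i ↔ π.blockMin (π.w i) = i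
  rcases hv i with h | ⟨h1, h2, h3⟩
  · rw [h]
  · have hne : ∀ e : Fin K, (e = c ∨ e = d) → π.blockMin e ≠ i := by
      rintro e (rfl | rfl)
      · exact ne_of_lt (lt_trans (π.blockMin_lt_blockMin hcd) h1)
      · exact ne_of_lt h1
    simp only [hne _ h3, hne _ h2]

theorem relabel_blockMax_of_ne {e : Fin K} (he1 : e ≠ c) (he2 : e ≠ d) :
    (relabel hcd hadj hv).blockMax e = π.blockMax e := by
  refine le_antisymm ?_ ?_
  · exact π.le_blockMax ((hv.eq_iff he1 he2).1 ((relabel hcd hadj hv).w_blockMax e))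
  · exact (relabel hcd hadj hv).le_blockMax ((hv.eq_iff he1 he2).2 (π.w_blockMax e))

theorem relabel_rinv_of_ne {e : Fin K} (he1 : e ≠ c) (he2 : e ≠ d) :
    (relabel hcd hadj hv).rinv ((relabel hcd hadj hv).blockMax e)
      = π.rinv (π.blockMax e) := by
  rw [relabel_blockMax_of_ne hcd hadj hv he1 he2]
  unfold rinv
  congr 1
  refine Finset.filter_congr fun a _ => ?_
  show a < π.blockMax e ∧ v (π.blockMax e) < v a ↔ _
  rw [(hv.eq_iff he1 he2).2 (π.w_blockMax e), π.w_blockMax,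
    hv.lt_iff hcd hadj he1 he2]

theorem relabel_cntGt_d :
    (univ.filter fun a => d < (relabel hcd hadj hv).w a).card
      = (univ.filter fun a => d < π.w a).card := by
  congr 1
  refine Finset.filter_congr fun a _ => ?_
  exact hv.d_lt_iff hcd

end Relabel

end SetPartition
namespace SetPartition

variable {n K : ℕ}

section Shove

variable (c d : Fin K) (hcd : c < d) (hadj : ∀ e, c < e → d ≤ e)

theorem adj_lt_iff (hcd : c < d) (hadj : ∀ e, c < e → d ≤ e) (x : Fin K) :
    c < x ↔ d ≤ x :=
  ⟨fun h => hadj x h, fun h => lt_of_lt_of_le hcd h⟩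

/-- The forward word: if block `d` is not a singleton, exchange letters `c` and `d`
from position `blockMax d` on; otherwise change every `c` after `blockMin d` to `d`. -/
noncomputable def shoveW (π : SetPartition n K) : Fin n → Fin K := fun a =>
  if π.blockMin d < π.blockMax d then
    (if π.blockMax d ≤ a then
      (if π.w a = c then d else if π.w a = d then c else π.w a) else π.w a)
  else (if π.blockMin d < a ∧ π.w a = c then d else π.w a)

/-- The backward word: if block `c` has an element after `blockMin d`, exchange letters
`c` and `d` from position `blockMax c` on; otherwise change every `d` after
`blockMin d` to `c`. -/
noncomputable def unshoveW (π : SetPartition n K) : Fin n → Fin K := fun a =>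
  if π.blockMin d < π.blockMax c then
    (if π.blockMax c ≤ a then
      (if π.w a = c then d else if π.w a = d then c else π.w a) else π.w a)
  else (if π.blockMin d < a ∧ π.w a = d then c else π.w a)

theorem shoveW_hyp (π : SetPartition n K) : RelabelHyp π c d (shoveW c d π) := by
  intro a
  unfold shoveW
  split_ifs with h1 h2 h3 h4 h5
  · exact Or.inr ⟨lt_of_lt_of_le h1 h2, Or.inl h3, Or.inr rfl⟩
  · exact Or.inr ⟨lt_of_lt_of_le h1 h2, Or.inr h4, Or.inl rfl⟩
  · exact Or.inl rfl
  · exact Or.inl rfl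
  · exact Or.inr ⟨h5.1, Or.inl h5.2, Or.inr rfl⟩
  · exact Or.inl rfl

theorem unshoveW_hyp (π : SetPartition n K) : RelabelHyp π c d (unshoveW c d π) := by
  intro a
  unfold unshoveW
  split_ifs with h1 h2 h3 h4 h5
  · exact Or.inr ⟨lt_of_lt_of_le h1 h2, Or.inl h3, Or.inr rfl⟩
  · exact Or.inr ⟨lt_of_lt_of_le h1 h2, Or.inr h4, Or.inl rfl⟩
  · exact Or.inl rfl
  · exact Or.inl rfl
  · exact Or.inr ⟨h5.1, Or.inr h5.2, Or.inl rfl⟩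
  · exact Or.inl rfl

variable {c d}

/-- The forward bijection. -/
noncomputable def shove (π : SetPartition n K) : SetPartition n K :=
  relabel hcd hadj (shoveW_hyp c d π)

/-- The backward bijection. -/
noncomputable def unshove (π : SetPartition n K) : SetPartition n K :=
  relabel hcd hadj (unshoveW_hyp c d π)

theorem shove_w (π : SetPartition n K) : (shove hcd hadj π).w = shoveW c d π := rfl

theorem unshove_w (π : SetPartition n K) : (unshove hcd hadj π).w = unshoveW c d π := rfl

theorem shove_blockMax_c_of_lt (π : SetPartition n K)
    (h : π.blockMin d < π.blockMax d) :
    (shove hcd hadj π).blockMax c = π.blockMax d := by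
  apply blockMax_eq_of
  · show shoveW c d π (π.blockMax d) = c
    unfold shoveW
    rw [if_pos h, if_pos le_rfl, if_neg (by rw [π.w_blockMax]; exact hcd.ne'),
      if_pos (π.w_blockMax d)]
  · intro i hi
    by_contra hgt
    push_neg at hgt
    have hi' : shoveW c d π i = c := hi
    unfold shoveW at hi'
    rw [if_pos h, if_pos (le_of_lt hgt)] at hi'
    by_cases hc : π.w i = c
    · rw [if_pos hc] at hi'; exact hcd.ne' hi'
    by_cases hd : π.w i = d
    · exact absurd (π.le_blockMax hd) (not_le.2 hgt)
    · rw [if_neg hc, if_neg hd] at hi'; exact hc hi'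

theorem shove_w_eq_of_lt (π : SetPartition n K) (h : π.blockMin d < π.blockMax d)
    {a : Fin n} (ha : a < π.blockMax d) : shoveW c d π a = π.w a := by
  unfold shoveW
  rw [if_pos h, if_neg (not_le.2 ha)]

theorem shove_c_lt_of_not (hcd : c < d) (π : SetPartition n K)
    (h : ¬ π.blockMin d < π.blockMax d) :
    ∀ a : Fin n, shoveW c d π a = c → a < π.blockMin d := by
  intro a ha
  unfold shoveW at ha
  rw [if_neg h] at ha
  by_cases h2 : π.blockMin d < a ∧ π.w a = c
  · rw [if_pos h2] at ha; exact absurd ha hcd.ne'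
  · rw [if_neg h2] at ha
    rcases lt_or_ge a (π.blockMin d) with h3 | h3
    · exact h3
    · exfalso
      rcases eq_or_lt_of_le h3 with h4 | h4
      · rw [← h4, π.w_blockMin] at ha; exact hcd.ne ha.symm
      · exact h2 ⟨h4, ha⟩

theorem blockMax_eq_blockMin_of_not (π : SetPartition n K)
    (h : ¬ π.blockMin d < π.blockMax d) : π.blockMax d = π.blockMin d :=
  le_antisymm (not_lt.1 h) (π.blockMin_le_blockMax d)

theorem unshove_shove (π : SetPartition n K) :
    unshove hcd hadj (shove hcd hadj π) = π := by
  apply ext'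
  funext a
  rw [unshove_w]
  have hmin : (shove hcd hadj π).blockMin d = π.blockMin d :=
    relabel_blockMin hcd hadj (shoveW_hyp c d π) d
  by_cases h : π.blockMin d < π.blockMax d
  · have hbm : (shove hcd hadj π).blockMax c = π.blockMax d :=
      shove_blockMax_c_of_lt hcd hadj π h
    show unshoveW c d (shove hcd hadj π) a = π.w a
    unfold unshoveW
    rw [hmin, hbm, if_pos h]
    by_cases hga : π.blockMax d ≤ a
    · rw [if_pos hga]
      have hsw : (shove hcd hadj π).w a = shoveW c d π a := rfl
      have hsa : shoveW c d π a =
          (if π.w a = c then d else if π.w a = d then c else π.w a) := by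
        unfold shoveW; rw [if_pos h, if_pos hga]
      rw [hsw, hsa]
      by_cases hc : π.w a = c
      · rw [if_pos hc, if_neg hcd.ne', if_pos rfl, hc]
      by_cases hd : π.w a = d
      · rw [if_neg hc, if_pos hd, if_pos rfl, hd]
      · rw [if_neg hc, if_neg hd, if_neg hc, if_neg hd]
    · rw [if_neg hga]
      show shoveW c d π a = π.w a
      exact shove_w_eq_of_lt π h (not_le.1 hga)
  · have hbm : ¬ (shove hcd hadj π).blockMin d < (shove hcd hadj π).blockMax c := by
      rw [hmin]
      exact not_lt.2 (le_of_lt (shove_c_lt_of_not hcd π h _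
        ((shove hcd hadj π).w_blockMax c)))
    show unshoveW c d (shove hcd hadj π) a = π.w a
    unfold unshoveW
    rw [if_neg hbm, hmin]
    have hsw : (shove hcd hadj π).w a = shoveW c d π a := rfl
    have hsa : shoveW c d π a = (if π.blockMin d < a ∧ π.w a = c then d else π.w a) := by
      unfold shoveW; rw [if_neg h]
    by_cases hoa : π.blockMin d < a
    · by_cases hc : π.w a = c
      · rw [if_pos ⟨hoa, by rw [hsw, hsa, if_pos ⟨hoa, hc⟩]⟩, hc]
      · have hd : π.w a ≠ d := by
          intro hd
          have := π.le_blockMax hd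
          rw [blockMax_eq_blockMin_of_not π h] at this
          exact absurd hoa (not_lt.2 this)
        rw [if_neg (by rw [hsw, hsa, if_neg (fun hh => hc hh.2)]; exact fun hh => hd hh.2),
          hsw, hsa, if_neg (fun hh => hc hh.2)]
    · rw [if_neg (fun hh => hoa hh.1), hsw, hsa, if_neg (fun hh => hoa hh.1)]

theorem unshove_blockMax_d_of_lt (π : SetPartition n K)
    (h : π.blockMin d < π.blockMax c) :
    (unshove hcd hadj π).blockMax d = π.blockMax c := by
  apply blockMax_eq_of
  · show unshoveW c d π (π.blockMax c) = d
    unfold unshoveW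
    rw [if_pos h, if_pos le_rfl, if_pos (π.w_blockMax c)]
  · intro i hi
    by_contra hgt
    push_neg at hgt
    have hi' : unshoveW c d π i = d := hi
    unfold unshoveW at hi'
    rw [if_pos h, if_pos (le_of_lt hgt)] at hi'
    by_cases hc : π.w i = c
    · exact absurd (π.le_blockMax hc) (not_le.2 hgt)
    by_cases hd : π.w i = d
    · rw [if_neg hc, if_pos hd] at hi'; exact hcd.ne hi'
    · rw [if_neg hc, if_neg hd] at hi'; exact hd hi'

theorem unshove_blockMax_d_of_not (π : SetPartition n K)
    (h : ¬ π.blockMin d < π.blockMax c) :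
    (unshove hcd hadj π).blockMax d = π.blockMin d := by
  apply blockMax_eq_of
  · show unshoveW c d π (π.blockMin d) = d
    unfold unshoveW
    rw [if_neg h, if_neg (fun hh => absurd hh.1 (lt_irrefl _)), π.w_blockMin]
  · intro i hi
    have hi' : unshoveW c d π i = d := hi
    unfold unshoveW at hi'
    rw [if_neg h] at hi'
    by_cases h2 : π.blockMin d < i ∧ π.w i = d
    · rw [if_pos h2] at hi'; exact absurd hi' hcd.ne
    · rw [if_neg h2] at hi'
      by_contra hgt
      push_neg at hgt
      exact h2 ⟨hgt, hi'⟩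

theorem shove_unshove (π : SetPartition n K) :
    shove hcd hadj (unshove hcd hadj π) = π := by
  apply ext'
  funext a
  rw [shove_w]
  have hmin : (unshove hcd hadj π).blockMin d = π.blockMin d :=
    relabel_blockMin hcd hadj (unshoveW_hyp c d π) d
  by_cases h : π.blockMin d < π.blockMax c
  · have hbm : (unshove hcd hadj π).blockMax d = π.blockMax c :=
      unshove_blockMax_d_of_lt hcd hadj π h
    show shoveW c d (unshove hcd hadj π) a = π.w a
    unfold shoveW
    rw [hmin, hbm, if_pos h]
    by_cases hga : π.blockMax c ≤ a
    · rw [if_pos hga]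
      have hsa : (unshove hcd hadj π).w a =
          (if π.w a = c then d else if π.w a = d then c else π.w a) := by
        show unshoveW c d π a = _
        unfold unshoveW; rw [if_pos h, if_pos hga]
      rw [hsa]
      by_cases hc : π.w a = c
      · rw [if_pos hc, if_neg hcd.ne', if_pos rfl, hc]
      by_cases hd : π.w a = d
      · rw [if_neg hc, if_pos hd, if_pos rfl, hd]
      · rw [if_neg hc, if_neg hd, if_neg hc, if_neg hd]
    · rw [if_neg hga]
      show unshoveW c d π a = π.w a
      unfold unshoveW
      rw [if_pos h, if_neg hga]
  · have hbm : ¬ (unshove hcd hadj π).blockMin d < (unshove hcd hadj π).blockMax d := by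
      rw [hmin, unshove_blockMax_d_of_not hcd hadj π h]
      exact lt_irrefl _
    show shoveW c d (unshove hcd hadj π) a = π.w a
    unfold shoveW
    rw [if_neg hbm, hmin]
    have hsa : (unshove hcd hadj π).w a =
        (if π.blockMin d < a ∧ π.w a = d then c else π.w a) := by
      show unshoveW c d π a = _
      unfold unshoveW; rw [if_neg h]
    by_cases hoa : π.blockMin d < a
    · by_cases hd : π.w a = d
      · rw [if_pos ⟨hoa, by rw [hsa, if_pos ⟨hoa, hd⟩]⟩, hd]
      · have hc : π.w a ≠ c := by
          intro hc
          have := π.le_blockMax hc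
          exact absurd (lt_of_lt_of_le hoa this) h
        rw [if_neg (by rw [hsa, if_neg (fun hh => hd hh.2)]; exact fun hh => hc hh.2),
          hsa, if_neg (fun hh => hd hh.2)]
    · rw [if_neg (fun hh => hoa hh.1), hsa, if_neg (fun hh => hoa hh.1)]

end Shove

end SetPartition
namespace SetPartition

variable {n K : ℕ}

section Count

variable {c d : Fin K} (hcd : c < d) (hadj : ∀ e, c < e → d ≤ e)

theorem rinv_add_nrinv_blockMax (π : SetPartition n K) (e : Fin K) :
    π.rinv (π.blockMax e) + π.nrinv (π.blockMax e)
      = (univ.filter fun a => e < π.w a).card := by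
  rw [π.rinv_add_nrinv]
  congr 1
  refine Finset.filter_congr fun a _ => ?_
  rw [π.w_blockMax]

theorem cnt_split (hcd : c < d) (hadj : ∀ e, c < e → d ≤ e) (π : SetPartition n K) :
    (univ.filter fun a => c < π.w a).card
      = (univ.filter fun a => d < π.w a).card
        + (univ.filter fun a => π.w a = d).card := by
  rw [← Finset.card_union_of_disjoint]
  · congr 1
    ext a
    simp only [mem_union, mem_filter, mem_univ, true_and]
    constructor
    · intro h
      rcases lt_or_eq_of_le (hadj _ h) with h' | h'
      · exact Or.inl h'
      · exact Or.inr h'.symm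
    · rintro (h | h)
      · exact lt_trans hcd h
      · rw [h]; exact hcd
  · rw [Finset.disjoint_left]
    rintro a ha hb
    simp only [mem_filter] at ha hb
    rw [hb.2] at ha
    exact lt_irrefl _ ha.2

/-- The crucial counting identity for the bijection `shove`. -/
theorem shove_rinv_key (π : SetPartition n K) :
    (shove hcd hadj π).rinv ((shove hcd hadj π).blockMax c) + 1
      = π.rinv (π.blockMax d) + (univ.filter fun a => π.w a = d).card := by
  by_cases h : π.blockMin d < π.blockMax d
  · rw [shove_blockMax_c_of_lt hcd hadj π h]
    have hgc : (shove hcd hadj π).w (π.blockMax d) = c := by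
      show shoveW c d π (π.blockMax d) = c
      unfold shoveW
      rw [if_pos h, if_pos le_rfl, if_neg (by rw [π.w_blockMax]; exact hcd.ne'),
        if_pos (π.w_blockMax d)]
    have e1 : (shove hcd hadj π).rinv (π.blockMax d)
        = (univ.filter fun a => a < π.blockMax d ∧ c < π.w a).card := by
      unfold rinv
      congr 1
      refine Finset.filter_congr fun a _ => ?_
      constructor
      · rintro ⟨h1, h2⟩
        rw [hgc] at h2
        rw [show (shove hcd hadj π).w a = π.w a from shove_w_eq_of_lt π h h1] at h2
        exact ⟨h1, h2⟩
      · rintro ⟨h1, h2⟩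
        refine ⟨h1, ?_⟩
        rw [hgc, show (shove hcd hadj π).w a = π.w a from shove_w_eq_of_lt π h h1]
        exact h2
    have e2 : (univ.filter fun a => a < π.blockMax d ∧ c < π.w a).card
        = (univ.filter fun a => a < π.blockMax d ∧ d < π.w a).card
          + (univ.filter fun a => a < π.blockMax d ∧ π.w a = d).card := by
      rw [← Finset.card_union_of_disjoint]
      · congr 1
        ext a
        simp only [mem_union, mem_filter, mem_univ, true_and]
        constructor
        · rintro ⟨h1, h2⟩
          rcases lt_or_eq_of_le (hadj _ h2) with h' | h'
          · exact Or.inl ⟨h1, h'⟩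
          · exact Or.inr ⟨h1, h'.symm⟩
        · rintro (⟨h1, h2⟩ | ⟨h1, h2⟩)
          · exact ⟨h1, lt_trans hcd h2⟩
          · rw [h2] at *; exact ⟨h1, hcd⟩
      · rw [Finset.disjoint_left]
        rintro a ha hb
        simp only [mem_filter] at ha hb
        rw [hb.2.2] at ha
        exact lt_irrefl _ ha.2.2
    have e3 : π.rinv (π.blockMax d)
        = (univ.filter fun a => a < π.blockMax d ∧ d < π.w a).card := by
      unfold rinv
      congr 1
      refine Finset.filter_congr fun a _ => ?_
      rw [π.w_blockMax]
    have e4 : (univ.filter fun a => π.w a = d)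
        = insert (π.blockMax d) (univ.filter fun a => a < π.blockMax d ∧ π.w a = d) := by
      ext a
      simp only [mem_insert, mem_filter, mem_univ, true_and]
      constructor
      · intro ha
        rcases lt_or_eq_of_le (π.le_blockMax ha) with h' | h'
        · exact Or.inr ⟨h', ha⟩
        · exact Or.inl h'
      · rintro (rfl | ⟨-, ha⟩)
        · exact π.w_blockMax d
        · exact ha
    have e5 : (univ.filter fun a => π.w a = d).card
        = (univ.filter fun a => a < π.blockMax d ∧ π.w a = d).card + 1 := by
      rw [e4, Finset.card_insert_of_notMem]
      simp only [mem_filter, mem_univ, true_and, not_and]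
      intro h'
      exact absurd h' (lt_irrefl _)
    omega
  · -- block d is a singleton
    have hg0 : π.blockMax d = π.blockMin d := blockMax_eq_blockMin_of_not π h
    have ht : (shove hcd hadj π).blockMax c < π.blockMin d :=
      shove_c_lt_of_not hcd π h _ ((shove hcd hadj π).w_blockMax c)
    have e1 : (shove hcd hadj π).rinv ((shove hcd hadj π).blockMax c) = 0 := by
      unfold rinv
      rw [Finset.card_eq_zero, Finset.filter_eq_empty_iff]
      rintro a -
      rintro ⟨h1, h2⟩
      rw [(shove hcd hadj π).w_blockMax c] at h2
      have ha : a ≤ π.blockMin d := le_of_lt (lt_trans h1 ht)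
      rw [show (shove hcd hadj π).w a = π.w a from (shoveW_hyp c d π).low ha] at h2
      exact absurd (π.blockMin_le_of_le (hadj _ h2)) (not_le.2 (lt_trans h1 ht))
    have e2 : π.rinv (π.blockMax d) = 0 := by
      unfold rinv
      rw [Finset.card_eq_zero, Finset.filter_eq_empty_iff]
      rintro a -
      rintro ⟨h1, h2⟩
      rw [hg0] at h1
      rw [π.w_blockMax] at h2
      exact absurd (π.blockMin_le_of_le (le_of_lt h2)) (not_le.2 h1)
    have e3 : (univ.filter fun a => π.w a = d) = {π.blockMin d} := by
      ext a
      simp only [mem_filter, mem_univ, true_and, mem_singleton]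
      constructor
      · intro ha
        refine le_antisymm ?_ (π.blockMin_le ha)
        have := π.le_blockMax ha
        rwa [hg0] at this
      · rintro rfl
        exact π.w_blockMin d
    rw [e1, e2, e3, Finset.card_singleton]

/-- The key exponent identity: applying `shove` decreases
`rinvSet closers + nrinv (blockMax ·)` (with the block index moving from `c` to `d`)
by exactly one. -/
theorem shove_exponent (π : SetPartition n K) :
    (π.rinvSet π.closers : ℤ) + (π.nrinv (π.blockMax c) : ℤ)
      = ((shove hcd hadj π).rinvSet (shove hcd hadj π).closers : ℤ)
        + ((shove hcd hadj π).nrinv ((shove hcd hadj π).blockMax d) : ℤ) + 1 := by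
  set σ := shove hcd hadj π with hσ
  have hsum : ∀ ρ : SetPartition n K,
      ∑ e : Fin K, ρ.rinv (ρ.blockMax e)
        = (∑ e ∈ (univ.erase d).erase c, ρ.rinv (ρ.blockMax e))
          + ρ.rinv (ρ.blockMax c) + ρ.rinv (ρ.blockMax d) := by
    intro ρ
    have a1 := Finset.sum_erase_add univ (fun e => ρ.rinv (ρ.blockMax e)) (mem_univ d)
    have a2 := Finset.sum_erase_add (univ.erase d) (fun e => ρ.rinv (ρ.blockMax e))
      (Finset.mem_erase.2 ⟨hcd.ne, mem_univ c⟩)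
    omega
  have hcore : ∀ e ∈ (univ.erase d).erase c,
      σ.rinv (σ.blockMax e) = π.rinv (π.blockMax e) := by
    intro e he
    rw [Finset.mem_erase, Finset.mem_erase] at he
    exact relabel_rinv_of_ne hcd hadj (shoveW_hyp c d π) he.1 he.2.1
  have h1 : π.rinvSet π.closers = ∑ e : Fin K, π.rinv (π.blockMax e) :=
    π.rinvSet_closers
  have h2 : σ.rinvSet σ.closers = ∑ e : Fin K, σ.rinv (σ.blockMax e) :=
    σ.rinvSet_closers
  have h3 : π.rinv (π.blockMax c) + π.nrinv (π.blockMax c)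
      = (univ.filter fun a => c < π.w a).card := rinv_add_nrinv_blockMax π c
  have h4 : σ.rinv (σ.blockMax d) + σ.nrinv (σ.blockMax d)
      = (univ.filter fun a => d < σ.w a).card := rinv_add_nrinv_blockMax σ d
  have h5 : (univ.filter fun a => d < σ.w a).card
      = (univ.filter fun a => d < π.w a).card :=
    relabel_cntGt_d hcd hadj (shoveW_hyp c d π)
  have h6 : σ.rinv (σ.blockMax c) + 1
      = π.rinv (π.blockMax d) + (univ.filter fun a => π.w a = d).card :=
    shove_rinv_key hcd hadj π
  have h7 : (univ.filter fun a => c < π.w a).card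
      = (univ.filter fun a => d < π.w a).card
        + (univ.filter fun a => π.w a = d).card := cnt_split hcd hadj π
  have hs1 := hsum π
  have hs2 := hsum σ
  have hcs := Finset.sum_congr rfl hcore
  zify at h1 h2 h3 h4 h5 h6 h7 hs1 hs2 hcs
  linarith [h1, h2, h3, h4, h5, h6, h7, hs1, hs2, hcs]

end Count

end SetPartition
namespace SetPartition

variable {n K : ℕ}

theorem key_step {c d : Fin K} (hcd : c < d) (hadj : ∀ e, c < e → d ≤ e)
    (q : ℝ) (hq : q ≠ 0) (M : ℤ) (O : Finset (Fin n)) :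
    (∑ π ∈ Finset.univ.filter (fun π : SetPartition n K => π.openers = O),
        q ^ (M - (π.rinvSet π.closers : ℤ) - (π.nrinv (π.blockMax c) : ℤ))) * q
      = ∑ π ∈ Finset.univ.filter (fun π : SetPartition n K => π.openers = O),
        q ^ (M - (π.rinvSet π.closers : ℤ) - (π.nrinv (π.blockMax d) : ℤ)) := by
  rw [Finset.sum_mul]
  refine Finset.sum_nbij' (fun π => shove hcd hadj π) (fun π => unshove hcd hadj π)
    ?_ ?_ ?_ ?_ ?_
  · intro π hπ
    rw [Finset.mem_filter] at hπ ⊢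
    exact ⟨mem_univ _, by
      rw [show (shove hcd hadj π).openers = π.openers from
        relabel_openers hcd hadj (shoveW_hyp c d π)]
      exact hπ.2⟩
  · intro π hπ
    rw [Finset.mem_filter] at hπ ⊢
    exact ⟨mem_univ _, by
      rw [show (unshove hcd hadj π).openers = π.openers from
        relabel_openers hcd hadj (unshoveW_hyp c d π)]
      exact hπ.2⟩
  · intro π _
    exact unshove_shove hcd hadj π
  · intro π _
    exact shove_unshove hcd hadj π
  · intro π _
    have hexp := shove_exponent hcd hadj π
    have : M - ((shove hcd hadj π).rinvSet (shove hcd hadj π).closers : ℤ)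
        - ((shove hcd hadj π).nrinv ((shove hcd hadj π).blockMax d) : ℤ)
        = (M - (π.rinvSet π.closers : ℤ) - (π.nrinv (π.blockMax c) : ℤ)) + 1 := by
      omega
    rw [this, zpow_add_one₀ hq]

theorem nrinv_blockMax_last {k : ℕ} (π : SetPartition n (k + 1)) :
    π.nrinv (π.blockMax (Fin.last k)) = 0 := by
  unfold nrinv
  rw [Finset.card_eq_zero, Finset.filter_eq_empty_iff]
  rintro a - ⟨-, hlt⟩
  rw [π.w_blockMax] at hlt
  exact absurd (Fin.le_last (π.w a)) (not_le.2 hlt)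

end SetPartition
/-- Let `m ≥ 1` and `k ≥ 0` with `k+1 ≤ m`, let `O ⊆ [m]` with `1 ∈ O`
and `#O = k+1`, and let `i ∈ [k]`. Then for every real `q > 0`:
`q^i · Σ_{π ∈ P(m,k+1;O)} q^{-rinv(F(π),π)} = Σ_{π ∈ P(m,k+1;O)} q^{stat_{i+1}(π)}`,
where `stat_j(π) = k - rinv(F(π),π) - nrinv(g(B_j),π)` and `B_{i+1}` has Fin-index `i`. -/
theorem q_pow_sum_rinv_eq_sum_stat (m k : ℕ) (hm : 1 ≤ m) (hkm : k + 1 ≤ m)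
    (O : Finset (Fin m)) (hO1 : (⟨0, by omega⟩ : Fin m) ∈ O) (hOcard : O.card = k + 1)
    (i : ℕ) (hi1 : 1 ≤ i) (hik : i ≤ k) (q : ℝ) (hq : 0 < q) :
    q ^ (i : ℤ) *
        ∑ π ∈ Finset.univ.filter (fun π : SetPartition m (k + 1) => π.openers = O),
          q ^ (-(π.rinvSet π.closers : ℤ)) =
      ∑ π ∈ Finset.univ.filter (fun π : SetPartition m (k + 1) => π.openers = O),
        q ^ ((k : ℤ) - (π.rinvSet π.closers : ℤ)
              - (π.nrinv (π.blockMax ⟨i, by omega⟩) : ℤ)) := by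
  have main : ∀ j c : ℕ, c + j = k → ∀ hck : c < k + 1,
      q ^ (c : ℤ) *
          ∑ π ∈ Finset.univ.filter (fun π : SetPartition m (k + 1) => π.openers = O),
            q ^ (-(π.rinvSet π.closers : ℤ)) =
        ∑ π ∈ Finset.univ.filter (fun π : SetPartition m (k + 1) => π.openers = O),
          q ^ ((k : ℤ) - (π.rinvSet π.closers : ℤ)
                - (π.nrinv (π.blockMax ⟨c, hck⟩) : ℤ)) := by
    intro j
    induction j with
    | zero =>
      intro c hc hck
      have hck' : c = k := by omega
      subst hck'
      rw [Finset.mul_sum]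
      refine Finset.sum_congr rfl fun π _ => ?_
      rw [show (⟨c, hck⟩ : Fin (c + 1)) = Fin.last c from rfl,
        π.nrinv_blockMax_last]
      rw [← zpow_add₀ (ne_of_gt hq)]
      congr 1
      omega
    | succ j ih =>
      intro c hc hck
      have hck1 : c + 1 < k + 1 := by omega
      have hd := ih (c + 1) (by omega) hck1
      have hstep := SetPartition.key_step (c := (⟨c, hck⟩ : Fin (k + 1)))
        (d := (⟨c + 1, hck1⟩ : Fin (k + 1)))
        (by rw [Fin.mk_lt_mk]; omega)
        (fun e he => by
          rw [Fin.lt_def] at he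
          rw [Fin.le_def]
          simp only [Fin.val_mk] at he ⊢
          omega)
        q (ne_of_gt hq) ((k : ℤ)) O
      refine mul_right_cancel₀ (ne_of_gt hq) ?_
      calc (q ^ (c : ℤ) *
              ∑ π ∈ Finset.univ.filter (fun π : SetPartition m (k + 1) => π.openers = O),
                q ^ (-(π.rinvSet π.closers : ℤ))) * q
          = q ^ ((c + 1 : ℕ) : ℤ) *
              ∑ π ∈ Finset.univ.filter (fun π : SetPartition m (k + 1) => π.openers = O),
                q ^ (-(π.rinvSet π.closers : ℤ)) := by
            rw [mul_right_comm, ← zpow_add_one₀ (ne_of_gt hq)]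
            norm_num
        _ = ∑ π ∈ Finset.univ.filter (fun π : SetPartition m (k + 1) => π.openers = O),
              q ^ ((k : ℤ) - (π.rinvSet π.closers : ℤ)
                    - (π.nrinv (π.blockMax ⟨c + 1, hck1⟩) : ℤ)) := hd
        _ = (∑ π ∈ Finset.univ.filter (fun π : SetPartition m (k + 1) => π.openers = O),
              q ^ ((k : ℤ) - (π.rinvSet π.closers : ℤ)
                    - (π.nrinv (π.blockMax ⟨c, hck⟩) : ℤ))) * q := hstep.symm
  exact main (k - i) i (by omega) (by omega)
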